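/- Let G be a locally compact group with a proper left invariant metric d generating its topology. Then the metric space (G,d) has bounded geometry, i.e., (G,d) is coarsely equivalent to a discrete metric space Q such that for every M > 0 there is a uniform bound Γ_M on the cardinality of all closed balls of radius M in Q. -/

import Mathlib

/-- A locally compact group with a plig metric has bounded geometry: `(G,d)` is
coarsely equivalent to a discrete subspace `Q` whose closed balls of each fixed
radius have uniformly bounded cardinality. The coarse equivalence is witnessed by
a map `f : G → Q` at uniformly bounded distance from the identity (its coarse
inverse being the inclusion `Q ⊆ G`). -/
theorem stmt5 {G : Type*} [Group G] [TopologicalSpace G] [IsTopologicalGroup G]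
    [LocallyCompactSpace G]
    (d : G → G → ℝ)
    (h0 : ∀ x y : G, d x y = 0 ↔ x = y)
    (hsymm : ∀ x y : G, d x y = d y x)
    (htri : ∀ x y z : G, d x z ≤ d x y + d y z)
    (hinv : ∀ g x y : G, d (g * x) (g * y) = d x y)
    (hproper : ∀ r : ℝ, IsCompact {x : G | d x 1 ≤ r})
    (hgen : ∀ s : Set G, IsOpen s ↔ ∀ x ∈ s, ∃ ε > 0, {y : G | d y x < ε} ⊆ s) :
    ∃ (Q : Set G) (f : G → G),
      -- f maps into Q and is surjective onto Q
      (∀ x : G, f x ∈ Q) ∧ (∀ q ∈ Q, f q = q) ∧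
      -- Q is uniformly discrete (hence a discrete space)
      (∀ p ∈ Q, ∀ q ∈ Q, p ≠ q → 1 ≤ d p q) ∧
      -- f is at uniformly bounded distance from the identity
      (∃ C > (0 : ℝ), ∀ x : G, d x (f x) ≤ C) ∧
      -- f is uniformly expansive (together with the above this makes f a
      -- coarse equivalence of (G,d) with (Q,d), with inverse the inclusion)
      (∀ R > (0 : ℝ), ∃ S > (0 : ℝ), ∀ x y : G, d x y ≤ R → d (f x) (f y) ≤ S) ∧
      -- bounded geometry: balls in Q of radius M have at most Γ_M elements
      (∀ M > (0 : ℝ), ∃ Γ : ℕ, ∀ q ∈ Q, ({p ∈ Q | d p q ≤ M}).ncard ≤ Γ) := by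
  classical
  have hrefl : ∀ x : G, d x x = 0 := fun x => (h0 x x).2 rfl
  have hnonneg : ∀ x y : G, 0 ≤ d x y := by
    intro x y
    have := htri x y x
    rw [hrefl, hsymm y x] at this
    linarith
  -- maximal 1-separated set via Zorn
  set Sep : Set (Set G) := {s | ∀ p ∈ s, ∀ q ∈ s, p ≠ q → 1 ≤ d p q} with hSep
  obtain ⟨Q, hQmax⟩ : ∃ m, Maximal (· ∈ Sep) m := by
    apply zorn_subset
    intro c hc hchain
    refine ⟨⋃₀ c, ?_, fun s hs => Set.subset_sUnion_of_mem hs⟩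
    intro p hp q hq hpq
    obtain ⟨s, hs, hps⟩ := hp
    obtain ⟨t, ht, hqt⟩ := hq
    rcases hchain.total hs ht with h | h
    · exact hc ht p (h hps) q hqt hpq
    · exact hc hs p hps q (h hqt) hpq
  have hQsep : ∀ p ∈ Q, ∀ q ∈ Q, p ≠ q → 1 ≤ d p q := hQmax.1
  -- every point is within distance 1 of Q
  have hnear : ∀ x : G, ∃ q ∈ Q, d x q ≤ 1 := by
    intro x
    by_cases hx : x ∈ Q
    · exact ⟨x, hx, by rw [hrefl]; norm_num⟩
    by_contra h
    push_neg at h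
    have hmem : insert x Q ∈ Sep := by
      intro p hp q hq hpq
      rcases hp with rfl | hp
      · rcases hq with rfl | hq
        · exact absurd rfl hpq
        · exact (h q hq).le
      · rcases hq with rfl | hq
        · rw [hsymm]
          exact (h p hp).le
        · exact hQsep p hp q hq hpq
    have := hQmax.2 hmem (Set.subset_insert x Q)
    exact hx (this (Set.mem_insert x Q))
  -- the retraction f
  set f : G → G := fun x => if hx : x ∈ Q then x else Classical.choose (hnear x) with hf
  have hfQ : ∀ x, f x ∈ Q := by
    intro x
    simp only [hf]
    split
    · assumption
    · exact (Classical.choose_spec (hnear x)).1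
  have hfd : ∀ x, d x (f x) ≤ 1 := by
    intro x
    simp only [hf]
    split
    · rw [hrefl]; norm_num
    · exact (Classical.choose_spec (hnear x)).2
  refine ⟨Q, f, hfQ, ?_, hQsep, ⟨1, one_pos, hfd⟩, ?_, ?_⟩
  · intro q hq; simp only [hf, dif_pos hq]
  · intro R hR
    refine ⟨R + 2, by linarith, fun x y hxy => ?_⟩
    have h1 := htri (f x) x (f y)
    have h2 := htri x y (f y)
    have h3 := hfd x
    have h4 := hfd y
    rw [hsymm (f x) x] at h1
    linarith
  · -- bounded geometry
    intro M hM
    -- cover the compact ball by finitely many half-balls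
    have hK := hproper M
    have hopen : ∀ x : G, IsOpen {y : G | d y x < 1/2} := by
      intro x
      rw [hgen]
      intro y hy
      refine ⟨1/2 - d y x, by simpa using hy, fun z hz => ?_⟩
      simp only [Set.mem_setOf_eq] at hz ⊢
      have := htri z y x
      linarith
    have hcover : {x : G | d x 1 ≤ M} ⊆ ⋃ x ∈ {x : G | d x 1 ≤ M}, {y : G | d y x < 1/2} := by
      intro x hx
      exact Set.mem_biUnion hx (by simp [hrefl])
    obtain ⟨t, hts, htfin, htcov⟩ := hK.elim_finite_subcover_image (fun x _ => hopen x) hcover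
    refine ⟨htfin.toFinset.card, fun q hq => ?_⟩
    -- inject the ball in Q into t
    have hmap : ∀ p ∈ {p ∈ Q | d p q ≤ M}, ∃ x ∈ t, d (q⁻¹ * p) x < 1/2 := by
      intro p hp
      have hpK : q⁻¹ * p ∈ {x : G | d x 1 ≤ M} := by
        have : d (q⁻¹ * p) 1 = d p q := by
          simpa using (hinv q (q⁻¹ * p) 1).symm
        simpa [this] using hp.2
      have := htcov hpK
      simpa using this
    set φ : G → G := fun p => if h : ∃ x ∈ t, d (q⁻¹ * p) x < 1/2 then Classical.choose h else 1
      with hφ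
    have : ({p ∈ Q | d p q ≤ M}).ncard ≤ htfin.toFinset.card := by
      rw [← Set.ncard_coe_finset]
      apply Set.ncard_le_ncard_of_injOn φ
      · intro p hp
        have hx := hmap p hp
        simp only [hφ, dif_pos hx, Set.Finite.coe_toFinset]
        exact (Classical.choose_spec hx).1
      · intro p hp p' hp' heq
        have hx := hmap p hp
        have hx' := hmap p' hp'
        have h1 : d (q⁻¹ * p) (φ p) < 1/2 := by
          simp only [hφ, dif_pos hx]; exact (Classical.choose_spec hx).2
        have h2 : d (q⁻¹ * p') (φ p') < 1/2 := by
          simp only [hφ, dif_pos hx']; exact (Classical.choose_spec hx').2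
        rw [heq] at h1
        by_contra hne
        have hsep : 1 ≤ d p p' := hQsep p hp.1 p' hp'.1 hne
        have : d (q⁻¹ * p) (q⁻¹ * p') = d p p' := hinv q⁻¹ p p'
        have htr := htri (q⁻¹ * p) (φ p') (q⁻¹ * p')
        rw [hsymm (φ p') (q⁻¹ * p')] at htr
        linarith
    exact this
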